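/- The number of subspaces V of dimension s in GF(q)^n at subspace distance exactly d from a fixed subspace U of dimension r is q^{u(d-u)} [r choose u]_q [n-r choose d-u]_q if u = (r+d-s)/2 is a nonnegative integer with u ≤ min{r,d} and d-u ≤ n-r, and 0 if r+d-s is odd. -/

import Mathlib

open Module

/-- The Gaussian binomial coefficient `[n choose r]_q`, via its product formula. -/
noncomputable def gaussBinom (q n r : ℕ) : ℝ :=
  ∏ i ∈ Finset.range r, (((q : ℝ) ^ n - (q : ℝ) ^ i) / ((q : ℝ) ^ r - (q : ℝ) ^ i))

/-- The subspace distance `d_S(U,V) = dim(U+V) - dim(U∩V)`. -/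
noncomputable def dS {F : Type} [Field F] {n : ℕ} (U V : Submodule F (Fin n → F)) : ℕ :=
  Module.finrank F ↥(U ⊔ V) - Module.finrank F ↥(U ⊓ V)

/-- Auxiliary product `∏_{j<m} (q^{m-j} - 1)`. -/
noncomputable def gaussAuxG (q m : ℕ) : ℝ := ∏ j ∈ Finset.range m, ((q : ℝ) ^ (m - j) - 1)

lemma gaussAuxG_pos {q m : ℕ} (hq : 2 ≤ q) : 0 < gaussAuxG q m := by
  apply Finset.prod_pos
  intro j hj
  simp only [Finset.mem_range] at hj
  have h1 : (2 : ℝ) ≤ (q : ℝ) := by exact_mod_cast hq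
  have : (1 : ℝ) < (q : ℝ) ^ (m - j) := by
    apply one_lt_pow₀ (by linarith) (by omega)
  linarith

lemma gaussAux_prod_eq {q m k : ℕ} (hq : 2 ≤ q) (hk : k ≤ m) :
    (∏ i ∈ Finset.range k, ((q : ℝ) ^ m - (q : ℝ) ^ i)) * gaussAuxG q (m - k)
      = (∏ i ∈ Finset.range k, (q : ℝ) ^ i) * gaussAuxG q m := by
  have h1 : ∏ i ∈ Finset.range k, ((q : ℝ) ^ m - (q : ℝ) ^ i)
      = (∏ i ∈ Finset.range k, (q : ℝ) ^ i) *
        ∏ i ∈ Finset.range k, ((q : ℝ) ^ (m - i) - 1) := by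
    rw [← Finset.prod_mul_distrib]
    refine Finset.prod_congr rfl fun i hi => ?_
    simp only [Finset.mem_range] at hi
    rw [mul_sub, mul_one, ← pow_add]
    congr 2
    omega
  have h2 : gaussAuxG q m
      = (∏ i ∈ Finset.range k, ((q : ℝ) ^ (m - i) - 1)) * gaussAuxG q (m - k) := by
    unfold gaussAuxG
    have hm : m = k + (m - k) := by omega
    rw [show (Finset.range m) = Finset.range (k + (m - k)) by rw [← hm],
      Finset.prod_range_add]
    congr 1
    refine Finset.prod_congr rfl fun j hj => ?_
    simp only [Finset.mem_range] at hj
    congr 2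
    omega
  rw [h1, h2]
  ring

lemma gaussBinom_eq_G {q m k : ℕ} (hq : 2 ≤ q) (hk : k ≤ m) :
    gaussBinom q m k = gaussAuxG q m / (gaussAuxG q k * gaussAuxG q (m - k)) := by
  have hQ : (∏ i ∈ Finset.range k, (q : ℝ) ^ i) ≠ 0 := by
    apply Finset.prod_ne_zero_iff.mpr
    intro i _
    positivity
  have hGm := gaussAuxG_pos (m := m) hq
  have hGk := gaussAuxG_pos (m := k) hq
  have hGmk := gaussAuxG_pos (m := m - k) hq
  have e1 := gaussAux_prod_eq (m := m) (k := k) hq hk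
  have e2 := gaussAux_prod_eq (m := k) (k := k) hq le_rfl
  rw [Nat.sub_self] at e2
  have hG0 : gaussAuxG q 0 = 1 := by simp [gaussAuxG]
  rw [hG0, mul_one] at e2
  rw [gaussBinom, Finset.prod_div_distrib, e2]
  field_simp
  linear_combination e1

lemma gaussBinom_symm {q m k : ℕ} (hq : 2 ≤ q) (hk : k ≤ m) :
    gaussBinom q m (m - k) = gaussBinom q m k := by
  rw [gaussBinom_eq_G hq hk, gaussBinom_eq_G hq (Nat.sub_le m k), Nat.sub_sub_self hk]
  ring


section Counting

variable {K V : Type*} [Field K] [Fintype K] [AddCommGroup V] [Module K V]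
  [FiniteDimensional K V]

local notation "q" => Fintype.card K

lemma card_li_range {t : ℕ} (ht : t ≤ finrank K V) :
    Nat.card { v : Fin t → V // LinearIndependent K v } =
      ∏ i ∈ Finset.range t, (q ^ finrank K V - q ^ i) := by
  haveI : Finite V := Module.finite_of_finite K
  rw [card_linearIndependent ht]
  exact Fin.prod_univ_eq_prod_range (fun i => q ^ finrank K V - q ^ i) t

lemma card_li_comp (A : Submodule K V) {t : ℕ} (ht : t ≤ finrank K (V ⧸ A)) :
    Nat.card { v : Fin t → V // LinearIndependent K (A.mkQ ∘ v) } =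
      (q ^ finrank K A) ^ t *
        ∏ i ∈ Finset.range t, (q ^ finrank K (V ⧸ A) - q ^ i) := by
  haveI : Finite V := Module.finite_of_finite K
  obtain ⟨σ, hσ⟩ := A.mkQ.exists_rightInverse_of_surjective (Submodule.range_mkQ A)
  have hσ' : ∀ x, A.mkQ (σ x) = x := fun x => by
    have := DFunLike.congr_fun hσ x
    simpa using this
  let E : { v : Fin t → V // LinearIndependent K (A.mkQ ∘ v) } ≃
      { w : Fin t → V ⧸ A // LinearIndependent K w } × (Fin t → A) :=
    { toFun := fun v => ⟨⟨A.mkQ ∘ v.1, v.2⟩, fun i =>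
        ⟨v.1 i - σ (A.mkQ (v.1 i)), by
          have : A.mkQ (v.1 i - σ (A.mkQ (v.1 i))) = 0 := by
            rw [map_sub, hσ', sub_self]
          rwa [← LinearMap.mem_ker, Submodule.ker_mkQ] at this⟩⟩
      invFun := fun p => ⟨fun i => σ (p.1.1 i) + (p.2 i : V), by
        have hcomp : A.mkQ ∘ (fun i => σ (p.1.1 i) + (p.2 i : V)) = p.1.1 := by
          funext i
          have hz : A.mkQ ((p.2 i : V)) = 0 := by
            rw [← LinearMap.mem_ker, Submodule.ker_mkQ]; exact (p.2 i).2
          simp [map_add, hσ', hz]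
        rw [hcomp]; exact p.1.2⟩
      left_inv := fun v => by
        ext i
        simp
      right_inv := fun p => by
        have hz : ∀ i, A.mkQ ((p.2 i : V)) = 0 := fun i => by
          rw [← LinearMap.mem_ker, Submodule.ker_mkQ]; exact (p.2 i).2
        have h1 : ∀ i, A.mkQ (σ (p.1.1 i) + (p.2 i : V)) = p.1.1 i := fun i => by
          rw [map_add, hσ', hz, add_zero]
        refine Prod.ext (Subtype.ext ?_) ?_
        · funext i
          exact h1 i
        · funext i
          apply Subtype.ext
          show (σ (p.1.1 i) + (p.2 i : V))
              - σ (A.mkQ (σ (p.1.1 i) + (p.2 i : V))) = (p.2 i : V)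
          rw [h1 i]
          abel }
  rw [Nat.card_congr E, Nat.card_prod, card_li_range ht]
  have : Nat.card (Fin t → A) = (q ^ finrank K A) ^ t := by
    haveI : Finite A := inferInstance
    rw [Nat.card_fun]
    · congr 1
      · haveI := Fintype.ofFinite A
        rw [Nat.card_eq_fintype_card, card_eq_pow_finrank (K := K) (V := A)]
      · simp
  rw [this, mul_comm]

lemma span_props (A : Submodule K V) {t : ℕ}
    (v : Fin t → V) (hv : LinearIndependent K (A.mkQ ∘ v)) :
    finrank K (Submodule.span K (Set.range v)) = t ∧
      Submodule.span K (Set.range v) ⊓ A = ⊥ := by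
  have hvli : LinearIndependent K v := hv.of_comp A.mkQ
  constructor
  · rw [finrank_span_eq_card hvli, Fintype.card_fin]
  · rw [eq_bot_iff]
    rintro x ⟨hx1, hx2⟩
    rw [SetLike.mem_coe, Submodule.mem_span_range_iff_exists_fun] at hx1
    obtain ⟨c, hc⟩ := hx1
    have hz : A.mkQ x = 0 := by
      rw [← LinearMap.mem_ker, Submodule.ker_mkQ]; exact hx2
    have hsum : ∑ i, c i • (A.mkQ ∘ v) i = 0 := by
      have : A.mkQ (∑ i, c i • v i) = 0 := by rw [hc]; exact hz
      simpa [map_sum, map_smul] using this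
    have hc0 := Fintype.linearIndependent_iff.mp hv c hsum
    have : x = 0 := by rw [← hc]; simp [hc0]
    simp [this]

lemma card_submodule_disjoint (A : Submodule K V) {t : ℕ}
    (ht : t ≤ finrank K (V ⧸ A)) :
    Nat.card { W : Submodule K V // finrank K W = t ∧ W ⊓ A = ⊥ } *
        ∏ i ∈ Finset.range t, (q ^ t - q ^ i) =
      (q ^ finrank K A) ^ t *
        ∏ i ∈ Finset.range t, (q ^ finrank K (V ⧸ A) - q ^ i) := by
  classical
  haveI : Finite V := Module.finite_of_finite K
  let D := { v : Fin t → V // LinearIndependent K (A.mkQ ∘ v) }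
  let T := { W : Submodule K V // finrank K W = t ∧ W ⊓ A = ⊥ }
  let f : D → T := fun v => ⟨Submodule.span K (Set.range v.1), span_props A v.1 v.2⟩
  have fib : ∀ W : T, Nat.card { v : D // f v = W } =
      ∏ i ∈ Finset.range t, (q ^ t - q ^ i) := by
    intro W
    have hWfd : FiniteDimensional K W.1 := inferInstance
    have hdisj : Disjoint W.1 A := disjoint_iff.mpr W.2.2
    let e : { v : D // f v = W } ≃ { u : Fin t → W.1 // LinearIndependent K u } :=
      { toFun := fun v => ⟨fun i => ⟨v.1.1 i, by
          have : v.1.1 i ∈ Submodule.span K (Set.range v.1.1) :=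
            Submodule.subset_span (Set.mem_range_self i)
          rw [show Submodule.span K (Set.range v.1.1) = W.1 from congrArg Subtype.val v.2] at this
          exact this⟩, by
          apply LinearIndependent.of_comp W.1.subtype
          exact v.1.2.of_comp A.mkQ⟩
        invFun := fun u => ⟨⟨fun i => (u.1 i : V), by
          have hli : LinearIndependent K (fun i => (u.1 i : V)) :=
            u.2.map' W.1.subtype (Submodule.ker_subtype W.1)
          apply hli.map
          rw [Submodule.ker_mkQ]
          apply Disjoint.mono_left _ hdisj
          rw [Submodule.span_le]
          rintro x ⟨i, rfl⟩
          exact (u.1 i).2⟩, by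
          apply Subtype.ext
          show Submodule.span K (Set.range fun i => (u.1 i : V)) = W.1
          have hli : LinearIndependent K (fun i => (u.1 i : V)) :=
            u.2.map' W.1.subtype (Submodule.ker_subtype W.1)
          apply Submodule.eq_of_le_of_finrank_eq
          · rw [Submodule.span_le]
            rintro x ⟨i, rfl⟩
            exact (u.1 i).2
          · rw [finrank_span_eq_card hli, Fintype.card_fin, W.2.1]⟩
        left_inv := fun v => by
          apply Subtype.ext; apply Subtype.ext; funext i; rfl
        right_inv := fun u => by
          apply Subtype.ext; funext i; apply Subtype.ext; rfl }
    rw [Nat.card_congr e]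
    have : t ≤ finrank K W.1 := le_of_eq W.2.1.symm
    rw [card_li_range this, W.2.1]
  haveI : Fintype D := Fintype.ofFinite D
  haveI : Fintype T := Fintype.ofFinite T
  have hD : Nat.card D = Nat.card T * ∏ i ∈ Finset.range t, (q ^ t - q ^ i) := by
    rw [Nat.card_congr (Equiv.sigmaFiberEquiv f).symm]
    rw [Nat.card_eq_fintype_card, Fintype.card_sigma]
    rw [Nat.card_eq_fintype_card]
    rw [Finset.sum_congr rfl fun W _ =>
      (by rw [← Nat.card_eq_fintype_card, fib W] :
        Fintype.card { x // f x = W } = ∏ i ∈ Finset.range t, (q ^ t - q ^ i))]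
    rw [Finset.sum_const, Finset.card_univ, smul_eq_mul]
  rw [← hD]
  exact card_li_comp A ht

lemma card_sub_submodule (U₀ : Submodule K V) {k : ℕ} (hk : k ≤ finrank K U₀) :
    Nat.card { W : Submodule K V // W ≤ U₀ ∧ finrank K W = k } *
        ∏ i ∈ Finset.range k, (q ^ k - q ^ i) =
      ∏ i ∈ Finset.range k, (q ^ finrank K U₀ - q ^ i) := by
  let e : { W : Submodule K V // W ≤ U₀ ∧ finrank K W = k } ≃
      { W' : Submodule K ↥U₀ // finrank K W' = k ∧ W' ⊓ (⊥ : Submodule K ↥U₀) = ⊥ } :=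
    { toFun := fun W => ⟨Submodule.comap U₀.subtype W.1, by
        constructor
        · rw [(Submodule.comapSubtypeEquivOfLe W.2.1).finrank_eq]; exact W.2.2
        · simp⟩
      invFun := fun W' => ⟨Submodule.map U₀.subtype W'.1, by
        constructor
        · exact Submodule.map_subtype_le U₀ W'.1
        · rw [← (Submodule.equivMapOfInjective U₀.subtype
            (Submodule.injective_subtype U₀) W'.1).finrank_eq]
          exact W'.2.1⟩
      left_inv := fun W => by
        apply Subtype.ext
        show Submodule.map U₀.subtype (Submodule.comap U₀.subtype W.1) = W.1
        rw [Submodule.map_comap_eq, Submodule.range_subtype, inf_eq_right.mpr W.2.1]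
      right_inv := fun W' => by
        apply Subtype.ext
        exact Submodule.comap_map_eq_of_injective (Submodule.injective_subtype U₀) W'.1 }
  rw [Nat.card_congr e]
  have h := card_submodule_disjoint (V := ↥U₀) (⊥ : Submodule K ↥U₀) (t := k) ?_
  · rw [h]
    have h0 : finrank K (⊥ : Submodule K ↥U₀) = 0 := finrank_bot K ↥U₀
    have hq : finrank K (↥U₀ ⧸ (⊥ : Submodule K ↥U₀)) = finrank K U₀ :=
      (Submodule.quotEquivOfEqBot (⊥ : Submodule K ↥U₀) rfl).finrank_eq
    rw [h0, hq]
    simp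
  · rw [(Submodule.quotEquivOfEqBot (⊥ : Submodule K ↥U₀) rfl).finrank_eq]
    exact hk

lemma finrank_map_mkQ_add {W Vv : Submodule K V} (hWV : W ≤ Vv) :
    finrank K (Vv.map W.mkQ) + finrank K W = finrank K Vv := by
  have h := LinearMap.finrank_range_add_finrank_ker (W.mkQ.comp Vv.subtype)
  rw [LinearMap.range_comp, Submodule.range_subtype, LinearMap.ker_comp,
    Submodule.ker_mkQ, (Submodule.comapSubtypeEquivOfLe hWV).finrank_eq] at h
  exact h

/-- Step B equivalence: subspaces `Vv` with `U ⊓ Vv = W` correspond to subspaces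
of the quotient by `W` meeting the image of `U` trivially. -/
lemma card_inf_eq (U W : Submodule K V) (hWU : W ≤ U) {s' t : ℕ}
    (hst : t + finrank K W = s') :
    Nat.card { Vv : Submodule K V // finrank K Vv = s' ∧ U ⊓ Vv = W } =
      Nat.card { V' : Submodule K (V ⧸ W) //
        finrank K V' = t ∧ V' ⊓ U.map W.mkQ = ⊥ } := by
  apply Nat.card_congr
  refine
    { toFun := fun Vv => ⟨Vv.1.map W.mkQ, ?_, ?_⟩
      invFun := fun V' => ⟨V'.1.comap W.mkQ, ?_, ?_⟩
      left_inv := ?_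
      right_inv := ?_ }
  · -- finrank of image
    have hWV : W ≤ Vv.1 := le_trans (le_of_eq Vv.2.2.symm) inf_le_right
    have h := finrank_map_mkQ_add hWV
    have h2 := Vv.2.1
    omega
  · -- trivial intersection
    rw [eq_bot_iff]
    rintro x ⟨hx1, hx2⟩
    simp only [SetLike.mem_coe, Submodule.mem_map] at hx1 hx2
    obtain ⟨a, ha, rfl⟩ := hx1
    obtain ⟨b, hb, hba⟩ := hx2
    have hab : b - a ∈ W := by
      rw [← Submodule.Quotient.eq W]
      exact hba
    have haU : a ∈ U := by
      have : a = b - (b - a) := by abel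
      rw [this]
      exact U.sub_mem hb (hWU hab)
    have : a ∈ W := by rw [← Vv.2.2]; exact ⟨haU, ha⟩
    show W.mkQ a ∈ (⊥ : Submodule K (V ⧸ W))
    rw [Submodule.mem_bot, ← LinearMap.mem_ker, Submodule.ker_mkQ]
    exact this
  · -- finrank of preimage
    have hWV : W ≤ V'.1.comap W.mkQ := by
      intro x hx
      simp only [Submodule.mem_comap]
      have : W.mkQ x = 0 := by
        rw [← LinearMap.mem_ker, Submodule.ker_mkQ]; exact hx
      rw [this]; exact V'.1.zero_mem
    have h := finrank_map_mkQ_add hWV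
    rw [Submodule.map_comap_eq_of_surjective (Submodule.mkQ_surjective W), V'.2.1] at h
    omega
  · -- intersection is W
    apply le_antisymm
    · rintro x ⟨hxU, hxV⟩
      simp only [SetLike.mem_coe, Submodule.mem_comap] at hxV
      have hmem : W.mkQ x ∈ V'.1 ⊓ U.map W.mkQ := ⟨hxV, ⟨x, hxU, rfl⟩⟩
      rw [V'.2.2, Submodule.mem_bot, ← LinearMap.mem_ker, Submodule.ker_mkQ] at hmem
      exact hmem
    · refine le_inf hWU ?_
      intro x hx
      simp only [Submodule.mem_comap]
      have : W.mkQ x = 0 := by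
        rw [← LinearMap.mem_ker, Submodule.ker_mkQ]; exact hx
      rw [this]; exact V'.1.zero_mem
  · -- left inverse
    intro Vv
    apply Subtype.ext
    show (Vv.1.map W.mkQ).comap W.mkQ = Vv.1
    rw [Submodule.comap_map_eq, Submodule.ker_mkQ,
      sup_eq_left.mpr (le_trans (le_of_eq Vv.2.2.symm) inf_le_right)]
  · -- right inverse
    intro V'
    apply Subtype.ext
    show (V'.1.comap W.mkQ).map W.mkQ = V'.1
    exact Submodule.map_comap_eq_of_surjective (Submodule.mkQ_surjective W) V'.1

end Counting

theorem count_at_subspace_distance (F : Type) [Field F] [Fintype F] (n r s d : ℕ)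
    (U : Submodule F (Fin n → F)) (hU : finrank F ↥U = r) :
    (∀ u : ℕ, r + d = s + 2 * u → u ≤ r → u ≤ d → d - u ≤ n - r →
      (Nat.card {V : Submodule F (Fin n → F) // finrank F ↥V = s ∧ dS U V = d} : ℝ)
        = (Fintype.card F : ℝ) ^ (u * (d - u)) * gaussBinom (Fintype.card F) r u
            * gaussBinom (Fintype.card F) (n - r) (d - u)) ∧
    (Odd ((r : ℤ) + (d : ℤ) - (s : ℤ)) →
      Nat.card {V : Submodule F (Fin n → F) // finrank F ↥V = s ∧ dS U V = d} = 0) := by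
  classical
  set q := Fintype.card F with hqdef
  have hq : 2 ≤ q := Fintype.one_lt_card
  have hn : finrank F (Fin n → F) = n := by
    rw [Module.finrank_fintype_fun_eq_card, Fintype.card_fin]
  have hrn : r ≤ n := by
    have := Submodule.finrank_le U
    omega
  constructor
  · intro u hu hur hud hdn
    set t := d - u with htdef
    set k := r - u with hkdef
    -- replace dS condition by condition on dim of intersection
    have hiff : ∀ V : Submodule F (Fin n → F),
        (finrank F V = s ∧ dS U V = d) ↔ (finrank F V = s ∧ finrank F ↥(U ⊓ V) = k) := by
      intro V
      have hsum := Submodule.finrank_sup_add_finrank_inf_eq U V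
      have hle : finrank F ↥(U ⊓ V) ≤ finrank F ↥(U ⊔ V) :=
        Submodule.finrank_mono (le_trans inf_le_left le_sup_left)
      rw [hU] at hsum
      unfold dS
      constructor
      · rintro ⟨h1, h2⟩; rw [h1] at hsum; exact ⟨h1, by omega⟩
      · rintro ⟨h1, h2⟩; rw [h1] at hsum; exact ⟨h1, by omega⟩
    rw [Nat.card_congr (Equiv.subtypeEquivRight hiff)]
    set Wty := { W : Submodule F (Fin n → F) // W ≤ U ∧ finrank F W = k } with hWty
    -- per-W counting
    set Pd := ∏ i ∈ Finset.range t, (q ^ t - q ^ i) with hPd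
    set Rn := ∏ i ∈ Finset.range t, (q ^ (n - r) - q ^ i) with hRn
    have key : ∀ W : Wty,
        Nat.card { V : Submodule F (Fin n → F) // finrank F V = s ∧ U ⊓ V = W.1 } * Pd
          = (q ^ u) ^ t * Rn := by
      intro W
      have hWk : finrank F W.1 = k := W.2.2
      have hst : t + finrank F W.1 = s := by rw [hWk]; omega
      rw [card_inf_eq U W.1 W.2.1 hst]
      have hA : finrank F (U.map W.1.mkQ) = u := by
        have h1 := finrank_map_mkQ_add W.2.1
        rw [hU, hWk] at h1
        omega
      have hQ1 : finrank F ((Fin n → F) ⧸ W.1) + finrank F W.1 = n := by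
        have := Submodule.finrank_quotient_add_finrank W.1
        rw [hn] at this; exact this
      have hQQ : finrank F (((Fin n → F) ⧸ W.1) ⧸ (U.map W.1.mkQ)) = n - r := by
        have h2 := Submodule.finrank_quotient_add_finrank (U.map W.1.mkQ)
        rw [hA] at h2
        rw [hWk] at hQ1
        omega
      have h3 := card_submodule_disjoint (U.map W.1.mkQ) (t := t) (by rw [hQQ]; exact hdn)
      rw [hA, hQQ] at h3
      exact h3
    -- sigma decomposition
    have big : Nat.card { V : Submodule F (Fin n → F) //
          finrank F V = s ∧ finrank F ↥(U ⊓ V) = k } * Pd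
        = Nat.card Wty * ((q ^ u) ^ t * Rn) := by
      set S' := { V : Submodule F (Fin n → F) // finrank F V = s ∧ finrank F ↥(U ⊓ V) = k }
      let g : S' → Wty := fun V => ⟨U ⊓ V.1, inf_le_left, V.2.2⟩
      have fibeq : ∀ W : Wty, Nat.card { x : S' // g x = W } =
          Nat.card { V : Submodule F (Fin n → F) // finrank F V = s ∧ U ⊓ V = W.1 } := by
        intro W
        apply Nat.card_congr
        exact
          { toFun := fun x => ⟨x.1.1, x.1.2.1, congrArg Subtype.val x.2⟩
            invFun := fun y => ⟨⟨y.1, y.2.1, by rw [y.2.2]; exact W.2.2⟩, Subtype.ext y.2.2⟩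
            left_inv := fun x => by apply Subtype.ext; apply Subtype.ext; rfl
            right_inv := fun y => by apply Subtype.ext; rfl }
      haveI : Fintype S' := Fintype.ofFinite S'
      haveI : Fintype Wty := Fintype.ofFinite Wty
      have hS' : Nat.card S' = ∑ W : Wty, Nat.card { x : S' // g x = W } := by
        rw [Nat.card_congr (Equiv.sigmaFiberEquiv g).symm, Nat.card_eq_fintype_card,
          Fintype.card_sigma]
        refine Finset.sum_congr rfl fun W _ => ?_
        rw [Nat.card_eq_fintype_card]
      rw [hS', Finset.sum_mul]
      rw [Finset.sum_congr rfl fun W _ => (by rw [fibeq W, key W] :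
        Nat.card { x : S' // g x = W } * Pd = (q ^ u) ^ t * Rn)]
      rw [Finset.sum_const, Finset.card_univ, smul_eq_mul, Nat.card_eq_fintype_card]
    -- number of W's
    have hW : Nat.card Wty * ∏ i ∈ Finset.range k, (q ^ k - q ^ i)
        = ∏ i ∈ Finset.range k, (q ^ r - q ^ i) := by
      have := card_sub_submodule U (k := k) (by rw [hU]; omega)
      rw [hU] at this
      exact this
    -- pass to the reals
    set Pk := ∏ i ∈ Finset.range k, (q ^ k - q ^ i) with hPk
    set Pr := ∏ i ∈ Finset.range k, (q ^ r - q ^ i) with hPr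
    have cast_prod : ∀ a b : ℕ, b ≤ a →
        ((∏ i ∈ Finset.range b, (q ^ a - q ^ i) : ℕ) : ℝ)
          = ∏ i ∈ Finset.range b, ((q : ℝ) ^ a - (q : ℝ) ^ i) := by
      intro a b hba
      rw [Nat.cast_prod]
      refine Finset.prod_congr rfl fun i hi => ?_
      simp only [Finset.mem_range] at hi
      have hle : q ^ i ≤ q ^ a := Nat.pow_le_pow_right (by omega) (by omega)
      rw [Nat.cast_sub hle, Nat.cast_pow, Nat.cast_pow]
    have prod_pos : ∀ b : ℕ, (0:ℝ) < ∏ i ∈ Finset.range b, ((q : ℝ) ^ b - (q : ℝ) ^ i) := by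
      intro b
      apply Finset.prod_pos
      intro i hi
      simp only [Finset.mem_range] at hi
      have h1 : (1:ℝ) < (q:ℝ) := by exact_mod_cast hq
      have := pow_lt_pow_right₀ h1 hi
      linarith
    have a1 : (Nat.card { V : Submodule F (Fin n → F) //
          finrank F V = s ∧ finrank F ↥(U ⊓ V) = k } : ℝ) *
          (∏ i ∈ Finset.range t, ((q : ℝ) ^ t - (q : ℝ) ^ i))
        = (Nat.card Wty : ℝ) * (((q:ℝ) ^ u) ^ t *
            ∏ i ∈ Finset.range t, ((q : ℝ) ^ (n - r) - (q : ℝ) ^ i)) := by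
      have := congrArg (fun x : ℕ => (x : ℝ)) big
      push_cast at this
      rw [cast_prod t t le_rfl, cast_prod (n - r) t hdn] at this
      push_cast at this
      exact this
    have a2 : (Nat.card Wty : ℝ) * (∏ i ∈ Finset.range k, ((q : ℝ) ^ k - (q : ℝ) ^ i))
        = ∏ i ∈ Finset.range k, ((q : ℝ) ^ r - (q : ℝ) ^ i) := by
      have := congrArg (fun x : ℕ => (x : ℝ)) hW
      push_cast at this
      rw [cast_prod k k le_rfl, cast_prod r k (by omega)] at this
      push_cast at this
      exact this
    have hsymm : gaussBinom q r u = gaussBinom q r k := (gaussBinom_symm hq hur).symm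
    rw [hsymm, gaussBinom, gaussBinom, Finset.prod_div_distrib, Finset.prod_div_distrib]
    have hPk0 : (∏ i ∈ Finset.range k, ((q : ℝ) ^ k - (q : ℝ) ^ i)) ≠ 0 :=
      ne_of_gt (prod_pos k)
    have hPd0 : (∏ i ∈ Finset.range t, ((q : ℝ) ^ t - (q : ℝ) ^ i)) ≠ 0 :=
      ne_of_gt (prod_pos t)
    rw [pow_mul]
    simp only [Nat.card_eq_fintype_card] at a1 a2 ⊢
    field_simp
    linear_combination (∏ i ∈ Finset.range k, ((q : ℝ) ^ k - (q : ℝ) ^ i)) * a1 +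
      (((q:ℝ) ^ u) ^ t * ∏ i ∈ Finset.range t, ((q : ℝ) ^ (n - r) - (q : ℝ) ^ i)) * a2
  · intro hodd
    obtain ⟨c, hc⟩ := hodd
    haveI : IsEmpty { V : Submodule F (Fin n → F) // finrank F V = s ∧ dS U V = d } := by
      constructor
      rintro ⟨V, h1, h2⟩
      have hsum := Submodule.finrank_sup_add_finrank_inf_eq U V
      rw [hU, h1] at hsum
      have hle : finrank F ↥(U ⊓ V) ≤ finrank F ↥(U ⊔ V) :=
        Submodule.finrank_mono (le_trans inf_le_left le_sup_left)
      have hsle : s ≤ finrank F ↥(U ⊔ V) := by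
        rw [← h1]; exact Submodule.finrank_mono le_sup_right
      unfold dS at h2
      omega
    exact Nat.card_of_isEmpty
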